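/- Convergence of the Hankel inversion integral for the full fractional solution: for every q > 0, every real α with 0 < α ≤ 1, and every r > 0, L > 0, the function ρ ↦ J₀(ρ·r)·J₁(ρ·L)/(ρ^{2α} + q) is Lebesgue integrable on (0,∞). -/

import Mathlib

open Real MeasureTheory Set

/-- The Bessel function of the first kind of order zero,
`J₀(x) = (1/π) ∫₀^π cos (x sin θ) dθ`. -/
noncomputable def J0 (x : ℝ) : ℝ := (1 / π) * ∫ θ in (0:ℝ)..π, Real.cos (x * Real.sin θ)

/-- The Bessel function of the first kind of order one,
`J₁(x) = (1/π) ∫₀^π cos (θ − x sin θ) dθ`. -/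
noncomputable def J1 (x : ℝ) : ℝ := (1 / π) * ∫ θ in (0:ℝ)..π, Real.cos (θ - x * Real.sin θ)

lemma J0_cont : Continuous J0 := by
  unfold J0
  exact continuous_const.mul <| intervalIntegral.continuous_parametric_intervalIntegral_of_continuous'
    (by fun_prop) 0 π

lemma J1_cont : Continuous J1 := by
  unfold J1
  exact continuous_const.mul <| intervalIntegral.continuous_parametric_intervalIntegral_of_continuous'
    (by fun_prop) 0 π

lemma J0_le_one (x : ℝ) : |J0 x| ≤ 1 := by
  unfold J0
  rw [abs_mul]
  have h : |∫ θ in (0:ℝ)..π, Real.cos (x * Real.sin θ)| ≤ 1 * |π - 0| := by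
    rw [← Real.norm_eq_abs]; apply intervalIntegral.norm_integral_le_of_norm_le_const
    intro θ _; rw [Real.norm_eq_abs]; exact Real.abs_cos_le_one _
  have hπ : (0:ℝ) < π := Real.pi_pos
  rw [abs_of_pos (by positivity : (0:ℝ) < 1/π)]
  calc (1/π) * |∫ θ in (0:ℝ)..π, Real.cos (x * Real.sin θ)| ≤ (1/π) * π := by
        apply mul_le_mul_of_nonneg_left _ (by positivity)
        simpa [abs_of_pos hπ] using h
    _ = 1 := by field_simp

lemma J1_le_one (x : ℝ) : |J1 x| ≤ 1 := by
  unfold J1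
  rw [abs_mul]
  have h : |∫ θ in (0:ℝ)..π, Real.cos (θ - x * Real.sin θ)| ≤ 1 * |π - 0| := by
    rw [← Real.norm_eq_abs]; apply intervalIntegral.norm_integral_le_of_norm_le_const
    intro θ _; rw [Real.norm_eq_abs]; exact Real.abs_cos_le_one _
  have hπ : (0:ℝ) < π := Real.pi_pos
  rw [abs_of_pos (by positivity : (0:ℝ) < 1/π)]
  calc (1/π) * |∫ θ in (0:ℝ)..π, Real.cos (θ - x * Real.sin θ)| ≤ (1/π) * π := by
        apply mul_le_mul_of_nonneg_left _ (by positivity)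
        simpa [abs_of_pos hπ] using h
    _ = 1 := by field_simp

lemma ibp_bound {u u' v v' : ℝ → ℝ} {b : ℝ} (hb : 0 ≤ b)
    (hu : ∀ θ ∈ Set.uIcc (0:ℝ) b, HasDerivAt u (u' θ) θ)
    (hv : ∀ θ ∈ Set.uIcc (0:ℝ) b, HasDerivAt v (v' θ) θ)
    (hu'c : ContinuousOn u' (Set.uIcc 0 b))
    (hv'c : ContinuousOn v' (Set.uIcc 0 b))
    (hu'pos : ∀ θ ∈ Set.uIcc (0:ℝ) b, 0 ≤ u' θ)
    (hvle : ∀ θ, |v θ| ≤ 1) :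
    |∫ θ in (0:ℝ)..b, u θ * v' θ| ≤ |u b * v b| + |u 0 * v 0| + (u b - u 0) := by
  have hu'i : IntervalIntegrable u' volume 0 b := hu'c.intervalIntegrable
  have hv'i : IntervalIntegrable v' volume 0 b := hv'c.intervalIntegrable
  rw [intervalIntegral.integral_mul_deriv_eq_deriv_mul hu hv hu'i hv'i]
  have hvc : ContinuousOn v (Set.uIcc 0 b) := fun θ hθ => (hv θ hθ).continuousAt.continuousWithinAt
  have hu'vi : IntervalIntegrable (fun θ => u' θ * v θ) volume 0 b :=
    (hu'c.mul hvc).intervalIntegrable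
  have key : |∫ θ in (0:ℝ)..b, u' θ * v θ| ≤ u b - u 0 := by
    have h1 : |∫ θ in (0:ℝ)..b, u' θ * v θ| ≤ ∫ θ in (0:ℝ)..b, |u' θ * v θ| :=
      intervalIntegral.abs_integral_le_integral_abs hb
    have h2 : (∫ θ in (0:ℝ)..b, |u' θ * v θ|) ≤ ∫ θ in (0:ℝ)..b, u' θ := by
      apply intervalIntegral.integral_mono_on hb hu'vi.abs hu'i
      intro θ hθ
      have hθ' : θ ∈ Set.uIcc (0:ℝ) b := by rw [Set.uIcc_of_le hb]; exact hθ
      calc |u' θ * v θ| = u' θ * |v θ| := by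
            rw [abs_mul, abs_of_nonneg (hu'pos θ hθ')]
        _ ≤ u' θ * 1 := mul_le_mul_of_nonneg_left (hvle θ) (hu'pos θ hθ')
        _ = u' θ := mul_one _
    have h3 : (∫ θ in (0:ℝ)..b, u' θ) = u b - u 0 :=
      intervalIntegral.integral_eq_sub_of_hasDerivAt hu hu'i
    linarith
  calc |u b * v b - u 0 * v 0 - ∫ θ in (0:ℝ)..b, u' θ * v θ|
      ≤ |u b * v b| + |u 0 * v 0| + |∫ θ in (0:ℝ)..b, u' θ * v θ| := by
        have := abs_sub (u b * v b - u 0 * v 0) (∫ θ in (0:ℝ)..b, u' θ * v θ)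
        have := abs_sub (u b * v b) (u 0 * v 0)
        calc |u b * v b - u 0 * v 0 - ∫ θ in (0:ℝ)..b, u' θ * v θ|
            ≤ |u b * v b - u 0 * v 0| + |∫ θ in (0:ℝ)..b, u' θ * v θ| := abs_sub _ _
          _ ≤ |u b * v b| + |u 0 * v 0| + |∫ θ in (0:ℝ)..b, u' θ * v θ| := by
              have := abs_sub (u b * v b) (u 0 * v 0); linarith
    _ ≤ |u b * v b| + |u 0 * v 0| + (u b - u 0) := by linarith

lemma eps_facts {x : ℝ} (hx : 1 ≤ x) :
    0 < Real.sqrt x ∧ (1:ℝ) ≤ Real.sqrt x ∧ 0 < 1 / Real.sqrt x ∧ 1 / Real.sqrt x ≤ 1 ∧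
    0 < π/2 - 1/Real.sqrt x ∧ π/2 - 1/Real.sqrt x < π/2 ∧
    (1/Real.sqrt x)/2 ≤ Real.sin (1/Real.sqrt x) := by
  have hx0 : (0:ℝ) < x := by linarith
  have hs1 : (1:ℝ) ≤ Real.sqrt x := by
    rw [show (1:ℝ) = Real.sqrt 1 by simp]; exact Real.sqrt_le_sqrt hx
  have hs0 : 0 < Real.sqrt x := by linarith
  have hε0 : 0 < 1 / Real.sqrt x := by positivity
  have hε1 : 1 / Real.sqrt x ≤ 1 := by
    rw [div_le_one hs0]; exact hs1
  have hπ : (2:ℝ) < π := by have := Real.pi_gt_three; linarith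
  have hsin : (1/Real.sqrt x)/2 ≤ Real.sin (1/Real.sqrt x) := by
    have := Real.sin_gt_sub_cube hε0
    set e := 1 / Real.sqrt x
    have he3 : e^3 ≤ e := by
      calc e^3 = e * e * e := by ring
        _ ≤ 1 * 1 * e := by
            apply mul_le_mul_of_nonneg_right _ (le_of_lt hε0)
            exact mul_le_mul hε1 hε1 (le_of_lt hε0) zero_le_one
        _ = e := by ring
    nlinarith
  refine ⟨hs0, hs1, hε0, hε1, by linarith, by linarith, hsin⟩

lemma sym_int {f : ℝ → ℝ} (hf : Continuous f) (hsym : ∀ θ, f (π - θ) = f θ) :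
    (∫ θ in (0:ℝ)..π, f θ) = 2 * ∫ θ in (0:ℝ)..(π/2), f θ := by
  have h1 : (∫ θ in (0:ℝ)..(π/2), f (π - θ)) = ∫ θ in (π - π/2:ℝ)..(π - 0), f θ :=
    intervalIntegral.integral_comp_sub_left f π
  have h2 : (∫ θ in (π/2:ℝ)..π, f θ) = ∫ θ in (0:ℝ)..(π/2), f θ := by
    rw [show (π - π/2:ℝ) = π/2 by ring, show (π - 0:ℝ) = π by ring] at h1
    rw [← h1]
    apply intervalIntegral.integral_congr
    intro θ _; exact hsym θ
  have h3 : (∫ θ in (0:ℝ)..(π/2), f θ) + ∫ θ in (π/2:ℝ)..π, f θ = ∫ θ in (0:ℝ)..π, f θ :=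
    intervalIntegral.integral_add_adjacent_intervals (hf.intervalIntegrable _ _) (hf.intervalIntegrable _ _)
  linarith

lemma half_bound {x : ℝ} (hx : 1 ≤ x) {f : ℝ → ℝ} (hf : Continuous f) (hf1 : ∀ θ, |f θ| ≤ 1)
    (main : |∫ θ in (0:ℝ)..(π/2 - 1/Real.sqrt x), f θ| ≤ 4/Real.sqrt x) :
    |∫ θ in (0:ℝ)..(π/2), f θ| ≤ 5/Real.sqrt x := by
  obtain ⟨hs0, hs1, hε0, hε1, hb0, hbπ, hsin⟩ := eps_facts hx
  set b := π/2 - 1/Real.sqrt x with hbdef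
  have hsplit : (∫ θ in (0:ℝ)..b, f θ) + ∫ θ in b..(π/2), f θ = ∫ θ in (0:ℝ)..(π/2), f θ :=
    intervalIntegral.integral_add_adjacent_intervals (hf.intervalIntegrable _ _) (hf.intervalIntegrable _ _)
  have htail : |∫ θ in b..(π/2), f θ| ≤ 1/Real.sqrt x := by
    rw [← Real.norm_eq_abs]
    have := intervalIntegral.norm_integral_le_of_norm_le_const
      (a := b) (b := π/2) (C := 1) (f := f) (fun θ _ => by rw [Real.norm_eq_abs]; exact hf1 θ)
    calc ‖∫ θ in b..(π/2), f θ‖ ≤ 1 * |π/2 - b| := this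
      _ = 1/Real.sqrt x := by
          rw [hbdef]; rw [show π/2 - (π/2 - 1/Real.sqrt x) = 1/Real.sqrt x by ring,
            abs_of_pos hε0]; ring
  calc |∫ θ in (0:ℝ)..(π/2), f θ|
      = |(∫ θ in (0:ℝ)..b, f θ) + ∫ θ in b..(π/2), f θ| := by rw [hsplit]
    _ ≤ |∫ θ in (0:ℝ)..b, f θ| + |∫ θ in b..(π/2), f θ| := abs_add_le _ _
    _ ≤ 4/Real.sqrt x + 1/Real.sqrt x := add_le_add main htail
    _ = 5/Real.sqrt x := by ring

lemma J0_main {x : ℝ} (hx : 1 ≤ x) :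
    |∫ θ in (0:ℝ)..(π/2 - 1/Real.sqrt x), Real.cos (x * Real.sin θ)| ≤ 4/Real.sqrt x := by
  obtain ⟨hs0, hs1, hε0, hε1, hb0, hbπ, hsin⟩ := eps_facts hx
  have hx0 : (0:ℝ) < x := by linarith
  obtain ⟨s, hsdef⟩ : ∃ s, Real.sqrt x = s := ⟨_, rfl⟩
  rw [hsdef] at hs0 hs1 hε0 hε1 hb0 hbπ hsin ⊢
  obtain ⟨b, hbdef⟩ : ∃ b, π/2 - 1/s = b := ⟨_, rfl⟩
  rw [hbdef] at hb0 hbπ ⊢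
  have hIcc : Set.uIcc (0:ℝ) b = Set.Icc 0 b := Set.uIcc_of_le (le_of_lt hb0)
  have hcospos : ∀ θ ∈ Set.uIcc (0:ℝ) b, 0 < Real.cos θ := by
    intro θ hθ
    rw [hIcc] at hθ
    obtain ⟨hθ1, hθ2⟩ := hθ
    apply Real.cos_pos_of_mem_Ioo
    constructor
    · have := Real.pi_pos; linarith
    · linarith
  have hθπ : ∀ θ ∈ Set.Icc (0:ℝ) b, θ ≤ π := by
    intro θ hθ
    have := Real.pi_pos
    obtain ⟨h1, h2⟩ := hθ
    linarith
  set u : ℝ → ℝ := fun θ => (x * Real.cos θ)⁻¹ with hudef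
  set u' : ℝ → ℝ := fun θ => Real.sin θ / (x * Real.cos θ ^ 2) with hu'def
  set v : ℝ → ℝ := fun θ => Real.sin (x * Real.sin θ) with hvdef
  set v' : ℝ → ℝ := fun θ => Real.cos (x * Real.sin θ) * (x * Real.cos θ) with hv'def
  have hu : ∀ θ ∈ Set.uIcc (0:ℝ) b, HasDerivAt u (u' θ) θ := by
    intro θ hθ
    have hc := hcospos θ hθ
    have hne : x * Real.cos θ ≠ 0 := by positivity
    have h1 : HasDerivAt (fun θ => x * Real.cos θ) (x * (-Real.sin θ)) θ :=
      (Real.hasDerivAt_cos θ).const_mul x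
    have h2 := h1.inv hne
    refine h2.congr_deriv ?_
    rw [hu'def]
    field_simp
  have hv : ∀ θ ∈ Set.uIcc (0:ℝ) b, HasDerivAt v (v' θ) θ := by
    intro θ _
    have h1 : HasDerivAt (fun θ => x * Real.sin θ) (x * Real.cos θ) θ :=
      (Real.hasDerivAt_sin θ).const_mul x
    exact (Real.hasDerivAt_sin (x * Real.sin θ)).comp θ h1
  have hu'c : ContinuousOn u' (Set.uIcc 0 b) := by
    apply ContinuousOn.div (Real.continuous_sin.continuousOn)
    · exact (continuous_const.mul (Real.continuous_cos.pow 2)).continuousOn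
    · intro θ hθ
      have := hcospos θ hθ
      positivity
  have hv'c : ContinuousOn v' (Set.uIcc 0 b) := by fun_prop
  have hu'pos : ∀ θ ∈ Set.uIcc (0:ℝ) b, 0 ≤ u' θ := by
    intro θ hθ
    have hc := hcospos θ hθ
    rw [hIcc] at hθ
    have hsθ : 0 ≤ Real.sin θ := Real.sin_nonneg_of_nonneg_of_le_pi hθ.1 (hθπ θ hθ)
    rw [hu'def]
    positivity
  have hvle : ∀ θ, |v θ| ≤ 1 := fun θ => Real.abs_sin_le_one _
  have key := ibp_bound (le_of_lt hb0) hu hv hu'c hv'c hu'pos hvle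
  have hcongr : (∫ θ in (0:ℝ)..b, Real.cos (x * Real.sin θ)) = ∫ θ in (0:ℝ)..b, u θ * v' θ := by
    apply intervalIntegral.integral_congr
    intro θ hθ
    have hc := hcospos θ hθ
    rw [hudef, hv'def]
    field_simp
  have hub : u b ≤ 2 / s := by
    rw [hudef]
    simp only
    have hcb : Real.cos b = Real.sin (1/s) := by
      rw [← hbdef, Real.cos_pi_div_two_sub]
    rw [hcb]
    have hxs : x * (1/s) = s := by
      rw [mul_one_div, ← hsdef, Real.div_sqrt]
    have h1 : s / 2 ≤ x * Real.sin (1/s) := by nlinarith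
    have h2 : (0:ℝ) < x * Real.sin (1/s) := by nlinarith
    rw [inv_le_comm₀ h2 (by positivity), inv_div]
    exact h1
  have hu0 : 0 ≤ u 0 := by
    rw [hudef]; simp only [Real.cos_zero, mul_one]; positivity
  have hv0 : v 0 = 0 := by rw [hvdef]; simp
  have hubnn : 0 ≤ u b := by
    rw [hudef]; simp only
    have := hcospos b (by rw [hIcc]; exact Set.right_mem_Icc.2 (le_of_lt hb0))
    positivity
  rw [hcongr]
  calc |∫ θ in (0:ℝ)..b, u θ * v' θ| ≤ |u b * v b| + |u 0 * v 0| + (u b - u 0) := key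
    _ ≤ u b * 1 + 0 + u b := by
        have h1 : |u b * v b| ≤ u b * 1 := by
          rw [abs_mul, abs_of_nonneg hubnn]
          exact mul_le_mul_of_nonneg_left (hvle b) hubnn
        have h2 : |u 0 * v 0| = 0 := by rw [hv0, mul_zero, abs_zero]
        linarith
    _ ≤ 2/s + 0 + 2/s := by linarith
    _ = 4/s := by ring

lemma J1_main {x : ℝ} (hx : 1 ≤ x) :
    |∫ θ in (0:ℝ)..(π/2 - 1/Real.sqrt x), Real.sin θ * Real.sin (x * Real.sin θ)|
      ≤ 4/Real.sqrt x := by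
  obtain ⟨hs0, hs1, hε0, hε1, hb0, hbπ, hsin⟩ := eps_facts hx
  have hx0 : (0:ℝ) < x := by linarith
  obtain ⟨s, hsdef⟩ : ∃ s, Real.sqrt x = s := ⟨_, rfl⟩
  rw [hsdef] at hs0 hs1 hε0 hε1 hb0 hbπ hsin ⊢
  obtain ⟨b, hbdef⟩ : ∃ b, π/2 - 1/s = b := ⟨_, rfl⟩
  rw [hbdef] at hb0 hbπ ⊢
  have hIcc : Set.uIcc (0:ℝ) b = Set.Icc 0 b := Set.uIcc_of_le (le_of_lt hb0)
  have hcospos : ∀ θ ∈ Set.uIcc (0:ℝ) b, 0 < Real.cos θ := by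
    intro θ hθ
    rw [hIcc] at hθ
    obtain ⟨hθ1, hθ2⟩ := hθ
    apply Real.cos_pos_of_mem_Ioo
    constructor
    · have := Real.pi_pos; linarith
    · linarith
  set u : ℝ → ℝ := fun θ => Real.tan θ / x with hudef
  set u' : ℝ → ℝ := fun θ => 1 / Real.cos θ ^ 2 / x with hu'def
  set v : ℝ → ℝ := fun θ => -Real.cos (x * Real.sin θ) with hvdef
  set v' : ℝ → ℝ := fun θ => Real.sin (x * Real.sin θ) * (x * Real.cos θ) with hv'def
  have hu : ∀ θ ∈ Set.uIcc (0:ℝ) b, HasDerivAt u (u' θ) θ := by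
    intro θ hθ
    have hc := (hcospos θ hθ).ne'
    exact (Real.hasDerivAt_tan hc).div_const x
  have hv : ∀ θ ∈ Set.uIcc (0:ℝ) b, HasDerivAt v (v' θ) θ := by
    intro θ _
    have h1 : HasDerivAt (fun θ => x * Real.sin θ) (x * Real.cos θ) θ :=
      (Real.hasDerivAt_sin θ).const_mul x
    have h2 := ((Real.hasDerivAt_cos (x * Real.sin θ)).comp θ h1).neg
    refine h2.congr_deriv ?_
    rw [hv'def]; ring
  have hu'c : ContinuousOn u' (Set.uIcc 0 b) := by
    apply ContinuousOn.div _ continuousOn_const (fun _ _ => hx0.ne')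
    apply ContinuousOn.div continuousOn_const
    · exact (Real.continuous_cos.pow 2).continuousOn
    · intro θ hθ
      have := hcospos θ hθ
      positivity
  have hv'c : ContinuousOn v' (Set.uIcc 0 b) := by fun_prop
  have hu'pos : ∀ θ ∈ Set.uIcc (0:ℝ) b, 0 ≤ u' θ := by
    intro θ hθ
    have hc := hcospos θ hθ
    rw [hu'def]
    positivity
  have hvle : ∀ θ, |v θ| ≤ 1 := by
    intro θ
    rw [hvdef, abs_neg]
    exact Real.abs_cos_le_one _
  have key := ibp_bound (le_of_lt hb0) hu hv hu'c hv'c hu'pos hvle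
  have hcongr : (∫ θ in (0:ℝ)..b, Real.sin θ * Real.sin (x * Real.sin θ))
      = ∫ θ in (0:ℝ)..b, u θ * v' θ := by
    apply intervalIntegral.integral_congr
    intro θ hθ
    have hc := hcospos θ hθ
    rw [hudef, hv'def]
    simp only
    rw [Real.tan_eq_sin_div_cos]
    field_simp
  have hub : u b ≤ 2 / s := by
    rw [hudef]
    simp only
    have hcb : Real.cos b = Real.sin (1/s) := by
      rw [← hbdef, Real.cos_pi_div_two_sub]
    have hcbpos : 0 < Real.cos b := hcospos b (by rw [hIcc]; exact Set.right_mem_Icc.2 (le_of_lt hb0))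
    have hxs : x * (1/s) = s := by
      rw [mul_one_div, ← hsdef, Real.div_sqrt]
    have h1 : s / 2 ≤ x * Real.cos b := by rw [hcb]; nlinarith
    have h2 : (0:ℝ) < x * Real.cos b := by positivity
    rw [Real.tan_eq_sin_div_cos, div_div]
    rw [div_le_div_iff₀ (by nlinarith) (by positivity : (0:ℝ) < s)]
    have := Real.sin_le_one b
    nlinarith
  have hu0 : u 0 = 0 := by rw [hudef]; simp
  have hubnn : 0 ≤ u b := by
    rw [hudef]
    have hbππ : b ≤ π/2 := le_of_lt hbπ
    have htan : 0 ≤ Real.tan b := by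
      rw [Real.tan_eq_sin_div_cos]
      have hsb : 0 ≤ Real.sin b := Real.sin_nonneg_of_nonneg_of_le_pi (le_of_lt hb0)
        (by have := Real.pi_pos; linarith)
      have hcb : 0 < Real.cos b := hcospos b (by rw [hIcc]; exact Set.right_mem_Icc.2 (le_of_lt hb0))
      positivity
    positivity
  rw [hcongr]
  calc |∫ θ in (0:ℝ)..b, u θ * v' θ| ≤ |u b * v b| + |u 0 * v 0| + (u b - u 0) := key
    _ ≤ u b * 1 + 0 + u b := by
        have h1 : |u b * v b| ≤ u b * 1 := by
          rw [abs_mul, abs_of_nonneg hubnn]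
          exact mul_le_mul_of_nonneg_left (hvle b) hubnn
        have h2 : |u 0 * v 0| = 0 := by rw [hu0, zero_mul, abs_zero]
        linarith
    _ ≤ 2/s + 0 + 2/s := by linarith
    _ = 4/s := by ring

lemma two_div_pi_le_one : 2 / π ≤ 1 := by
  have := Real.pi_gt_three
  rw [div_le_one (by linarith)]
  linarith

lemma J0_decay {x : ℝ} (hx : 1 ≤ x) : |J0 x| ≤ 5 / Real.sqrt x := by
  have hs0 : 0 < Real.sqrt x := Real.sqrt_pos.2 (by linarith)
  have hhalf : |∫ θ in (0:ℝ)..(π/2), Real.cos (x * Real.sin θ)| ≤ 5/Real.sqrt x :=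
    half_bound hx (by fun_prop) (fun θ => Real.abs_cos_le_one _) (J0_main hx)
  have hsym : (∫ θ in (0:ℝ)..π, Real.cos (x * Real.sin θ))
      = 2 * ∫ θ in (0:ℝ)..(π/2), Real.cos (x * Real.sin θ) :=
    sym_int (by fun_prop) (fun θ => by rw [Real.sin_pi_sub])
  have hπ := Real.pi_pos
  rw [J0, hsym, abs_mul, abs_mul]
  rw [abs_of_pos (by positivity : (0:ℝ) < 1/π), abs_of_pos (by norm_num : (0:ℝ) < 2)]
  calc 1/π * (2 * |∫ θ in (0:ℝ)..(π/2), Real.cos (x * Real.sin θ)|)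
      ≤ 1/π * (2 * (5/Real.sqrt x)) := by
        apply mul_le_mul_of_nonneg_left _ (by positivity)
        apply mul_le_mul_of_nonneg_left hhalf (by norm_num)
    _ = (2/π) * (5/Real.sqrt x) := by ring
    _ ≤ 1 * (5/Real.sqrt x) := by
        apply mul_le_mul_of_nonneg_right two_div_pi_le_one (by positivity)
    _ = 5/Real.sqrt x := one_mul _

lemma J1_decay {x : ℝ} (hx : 1 ≤ x) : |J1 x| ≤ 5 / Real.sqrt x := by
  have hx0 : (0:ℝ) < x := by linarith
  have hs0 : 0 < Real.sqrt x := Real.sqrt_pos.2 hx0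
  -- split the integrand
  have hsplit : (∫ θ in (0:ℝ)..π, Real.cos (θ - x * Real.sin θ))
      = (∫ θ in (0:ℝ)..π, Real.cos θ * Real.cos (x * Real.sin θ))
        + ∫ θ in (0:ℝ)..π, Real.sin θ * Real.sin (x * Real.sin θ) := by
    have i1 : IntervalIntegrable (fun θ => Real.cos θ * Real.cos (x * Real.sin θ)) volume 0 π :=
      (by fun_prop : Continuous fun θ => Real.cos θ * Real.cos (x * Real.sin θ)).intervalIntegrable 0 π
    have i2 : IntervalIntegrable (fun θ => Real.sin θ * Real.sin (x * Real.sin θ)) volume 0 π :=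
      (by fun_prop : Continuous fun θ => Real.sin θ * Real.sin (x * Real.sin θ)).intervalIntegrable 0 π
    rw [← intervalIntegral.integral_add i1 i2]
    apply intervalIntegral.integral_congr
    intro θ _
    exact Real.cos_sub θ (x * Real.sin θ)
  -- first integral vanishes
  have hfirst : (∫ θ in (0:ℝ)..π, Real.cos θ * Real.cos (x * Real.sin θ)) = 0 := by
    have hftc : ∀ θ ∈ Set.uIcc (0:ℝ) π, HasDerivAt (fun θ => Real.sin (x * Real.sin θ) / x)
        (Real.cos θ * Real.cos (x * Real.sin θ)) θ := by
      intro θ _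
      have h1 : HasDerivAt (fun θ => x * Real.sin θ) (x * Real.cos θ) θ :=
        (Real.hasDerivAt_sin θ).const_mul x
      have h2 := ((Real.hasDerivAt_sin (x * Real.sin θ)).comp θ h1).div_const x
      refine h2.congr_deriv ?_
      field_simp
    have i1 : IntervalIntegrable (fun θ => Real.cos θ * Real.cos (x * Real.sin θ)) volume 0 π :=
      (by fun_prop : Continuous fun θ => Real.cos θ * Real.cos (x * Real.sin θ)).intervalIntegrable 0 π
    rw [intervalIntegral.integral_eq_sub_of_hasDerivAt hftc i1]
    simp
  have hhalf : |∫ θ in (0:ℝ)..(π/2), Real.sin θ * Real.sin (x * Real.sin θ)| ≤ 5/Real.sqrt x := by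
    apply half_bound hx (by fun_prop) _ (J1_main hx)
    intro θ
    rw [abs_mul]
    calc |Real.sin θ| * |Real.sin (x * Real.sin θ)| ≤ 1 * 1 :=
        mul_le_mul (Real.abs_sin_le_one _) (Real.abs_sin_le_one _) (abs_nonneg _) zero_le_one
      _ = 1 := one_mul _
  have hsym : (∫ θ in (0:ℝ)..π, Real.sin θ * Real.sin (x * Real.sin θ))
      = 2 * ∫ θ in (0:ℝ)..(π/2), Real.sin θ * Real.sin (x * Real.sin θ) :=
    sym_int (by fun_prop) (fun θ => by rw [Real.sin_pi_sub])
  have hπ := Real.pi_pos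
  rw [J1, hsplit, hfirst, zero_add, hsym, abs_mul, abs_mul]
  rw [abs_of_pos (by positivity : (0:ℝ) < 1/π), abs_of_pos (by norm_num : (0:ℝ) < 2)]
  calc 1/π * (2 * |∫ θ in (0:ℝ)..(π/2), Real.sin θ * Real.sin (x * Real.sin θ)|)
      ≤ 1/π * (2 * (5/Real.sqrt x)) := by
        apply mul_le_mul_of_nonneg_left _ (by positivity)
        apply mul_le_mul_of_nonneg_left hhalf (by norm_num)
    _ = (2/π) * (5/Real.sqrt x) := by ring
    _ ≤ 1 * (5/Real.sqrt x) := by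
        apply mul_le_mul_of_nonneg_right two_div_pi_le_one (by positivity)
    _ = 5/Real.sqrt x := one_mul _

/-- Convergence of the Hankel inversion integral for the full fractional solution: for every
`q > 0`, `0 < α ≤ 1`, `r > 0` and `L > 0`, the function `ρ ↦ J₀(ρ·r)·J₁(ρ·L)/(ρ^{2α} + q)`
is Lebesgue integrable on `(0,∞)`. -/
theorem hankel_inversion_integrable (q α r L : ℝ) (hq : 0 < q) (hα : 0 < α) (hα' : α ≤ 1)
    (hr : 0 < r) (hL : 0 < L) :
    IntegrableOn (fun ρ : ℝ => J0 (ρ * r) * J1 (ρ * L) / (ρ ^ (2 * α) + q)) (Ioi 0) := by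
  set g : ℝ → ℝ := fun ρ => J0 (ρ * r) * J1 (ρ * L) / (ρ ^ (2 * α) + q) with hgdef
  have hdenpos : ∀ ρ : ℝ, 0 < ρ → 0 < ρ ^ (2 * α) + q := by
    intro ρ hρ
    have : 0 < ρ ^ (2 * α) := Real.rpow_pos_of_pos hρ _
    linarith
  have hcont : ContinuousOn g (Ioi 0) := by
    apply ContinuousOn.div
    · exact ((J0_cont.comp (continuous_id.mul continuous_const)).mul
        (J1_cont.comp (continuous_id.mul continuous_const))).continuousOn
    · apply ContinuousOn.add _ continuousOn_const
      intro ρ hρ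
      exact (Real.continuousAt_rpow_const ρ (2*α) (Or.inl (ne_of_gt hρ))).continuousWithinAt
    · intro ρ hρ
      exact ne_of_gt (hdenpos ρ hρ)
  set ρ₀ : ℝ := max 1 (max (1/r) (1/L)) with hρ₀def
  have hρ₀1 : (1:ℝ) ≤ ρ₀ := le_max_left _ _
  have hρ₀pos : (0:ℝ) < ρ₀ := by linarith
  have part1 : IntegrableOn g (Ioc 0 ρ₀) := by
    have hconst : IntegrableOn (fun _ : ℝ => 1/q) (Ioc 0 ρ₀) :=
      integrableOn_const measure_Ioc_lt_top.ne
    apply Integrable.mono' hconst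
    · exact (hcont.mono Ioc_subset_Ioi_self).aestronglyMeasurable measurableSet_Ioc
    · filter_upwards [ae_restrict_mem measurableSet_Ioc] with ρ hρ
      have hρ0 : 0 < ρ := hρ.1
      have hd := hdenpos ρ hρ0
      have hrpow : 0 ≤ ρ ^ (2*α) := le_of_lt (Real.rpow_pos_of_pos hρ0 _)
      rw [Real.norm_eq_abs, hgdef]
      simp only
      rw [abs_div, abs_of_pos hd]
      have hnum : |J0 (ρ * r) * J1 (ρ * L)| ≤ 1 := by
        rw [abs_mul]
        calc |J0 (ρ * r)| * |J1 (ρ * L)| ≤ 1 * 1 :=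
            mul_le_mul (J0_le_one _) (J1_le_one _) (abs_nonneg _) zero_le_one
          _ = 1 := one_mul _
      calc |J0 (ρ * r) * J1 (ρ * L)| / (ρ ^ (2*α) + q) ≤ 1 / (ρ ^ (2*α) + q) :=
            (div_le_div_iff_of_pos_right hd).2 hnum
        _ ≤ 1 / q := one_div_le_one_div_of_le hq (by linarith)
  have part2 : IntegrableOn g (Ioi ρ₀) := by
    have hexp : -(1 + 2*α) < -1 := by linarith
    have hint : IntegrableOn (fun ρ : ℝ => (25 / Real.sqrt (r * L)) * ρ ^ (-(1 + 2*α))) (Ioi ρ₀) :=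
      (integrableOn_Ioi_rpow_of_lt hexp hρ₀pos).const_mul _
    apply Integrable.mono' hint
    · exact (hcont.mono (Ioi_subset_Ioi (le_of_lt hρ₀pos))).aestronglyMeasurable measurableSet_Ioi
    · filter_upwards [ae_restrict_mem measurableSet_Ioi] with ρ hρ
      have hρρ₀ : ρ₀ < ρ := hρ
      have hρ0 : 0 < ρ := lt_trans hρ₀pos hρρ₀
      have hρ1 : 1 ≤ ρ := le_trans hρ₀1 (le_of_lt hρρ₀)
      have hd := hdenpos ρ hρ0
      have hrpowpos : 0 < ρ ^ (2*α) := Real.rpow_pos_of_pos hρ0 _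
      -- ρ r ≥ 1 and ρ L ≥ 1
      have hρr : 1 ≤ ρ * r := by
        have h1 : 1/r ≤ ρ := le_trans (le_trans (le_max_left _ _) (le_max_right _ _)) (le_of_lt hρρ₀)
        rw [div_le_iff₀ hr] at h1
        linarith
      have hρL : 1 ≤ ρ * L := by
        have h1 : 1/L ≤ ρ := le_trans (le_trans (le_max_right _ _) (le_max_right _ _)) (le_of_lt hρρ₀)
        rw [div_le_iff₀ hL] at h1
        linarith
      have hnum : |J0 (ρ * r) * J1 (ρ * L)| ≤ 25 / (ρ * Real.sqrt (r * L)) := by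
        rw [abs_mul]
        have h1 := J0_decay hρr
        have h2 := J1_decay hρL
        have hsr : 0 < Real.sqrt (ρ * r) := Real.sqrt_pos.2 (by nlinarith)
        have hsL : 0 < Real.sqrt (ρ * L) := Real.sqrt_pos.2 (by nlinarith)
        calc |J0 (ρ * r)| * |J1 (ρ * L)| ≤ (5 / Real.sqrt (ρ * r)) * (5 / Real.sqrt (ρ * L)) :=
            mul_le_mul h1 h2 (abs_nonneg _) (by positivity)
          _ = 25 / (Real.sqrt (ρ * r) * Real.sqrt (ρ * L)) := by
              field_simp
              norm_num
          _ = 25 / (ρ * Real.sqrt (r * L)) := by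
              congr 1
              rw [← Real.sqrt_mul (by positivity) , show ρ * r * (ρ * L) = ρ^2 * (r * L) by ring,
                Real.sqrt_mul (by positivity), Real.sqrt_sq (le_of_lt hρ0)]
      have hrw : (25 / Real.sqrt (r * L)) * ρ ^ (-(1 + 2*α))
          = (25 / (ρ * Real.sqrt (r * L))) / ρ ^ (2*α) := by
        rw [show -(1 + 2*α) = (-1) + (-(2*α)) by ring, Real.rpow_add hρ0,
          Real.rpow_neg_one, Real.rpow_neg (le_of_lt hρ0)]
        field_simp
      rw [Real.norm_eq_abs, hgdef]
      simp only
      rw [abs_div, abs_of_pos hd, hrw]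
      have hnum25 : (0:ℝ) ≤ 25 / (ρ * Real.sqrt (r * L)) := by positivity
      calc |J0 (ρ * r) * J1 (ρ * L)| / (ρ ^ (2*α) + q)
          ≤ (25 / (ρ * Real.sqrt (r * L))) / (ρ ^ (2*α) + q) := (div_le_div_iff_of_pos_right hd).2 hnum
        _ ≤ (25 / (ρ * Real.sqrt (r * L))) / ρ ^ (2*α) := by
            exact div_le_div_of_nonneg_left hnum25 hrpowpos (by linarith)
  have : Ioi (0:ℝ) = Ioc 0 ρ₀ ∪ Ioi ρ₀ := (Ioc_union_Ioi_eq_Ioi (le_of_lt hρ₀pos)).symm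
  rw [this]
  exact part1.union part2
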